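/- Fix d = 4, let i₁, i₂, j₁, j₂ ∈ {0, 1}, 0 ≤ l₁, l₂ ≤ N−1, and 0 ≤ τ ≤ N−1, and set a = α^{i₁} − α^{2τ + i₂} and b = α^{d·l₁ + j₁} − α^{d·τ + d·l₂ + j₂} in F_q. If a = 0 and b = 0, then τ = 0, i₁ = i₂, j₁ = j₂, and l₁ = l₂ (i.e. a = b = 0 occurs only in the trivial autocorrelation case). -/

import Mathlib

private lemma pow34 (m : ℕ) : 3 ^ (2 * m + 1) % 4 = 3 := by
  induction m with
  | zero => rfl
  | succ k ih =>
    have h : 3 ^ (2 * (k + 1) + 1) = 3 ^ (2 * k + 1) * 9 := by ring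
    rw [h, Nat.mul_mod, ih]

/-- For `d = 4`, with `i₁, i₂, j₁, j₂ ∈ {0,1}`, `0 ≤ l₁, l₂ ≤ N-1`, `0 ≤ τ ≤ N-1`,
`a = α^{i₁} - α^{2τ+i₂}` and `b = α^{4l₁+j₁} - α^{4τ+4l₂+j₂}`: if `a = 0` and `b = 0`,
then `τ = 0`, `i₁ = i₂`, `j₁ = j₂` and `l₁ = l₂`. -/
theorem statement_11
    (p n : ℕ) (hp : p.Prime) (hp3 : p % 4 = 3) (hn : Odd n)
    (F : Type) [Field F] [Fintype F]
    (hcard : Fintype.card F = p ^ n)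
    (α : F) (hα : ∀ x : F, x ≠ 0 → ∃ k : ℕ, α ^ k = x)
    (N : ℕ) (hN : N = (p ^ n - 1) / 2)
    (i₁ j₁ l₁ i₂ j₂ l₂ τ : ℕ)
    (hi₁ : i₁ ≤ 1) (hj₁ : j₁ ≤ 1) (hl₁ : l₁ < N)
    (hi₂ : i₂ ≤ 1) (hj₂ : j₂ ≤ 1) (hl₂ : l₂ < N) (hτ : τ < N)
    (ha : α ^ i₁ - α ^ (2 * τ + i₂) = 0)
    (hb : α ^ (4 * l₁ + j₁) - α ^ (4 * τ + 4 * l₂ + j₂) = 0) :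
    τ = 0 ∧ i₁ = i₂ ∧ j₁ = j₂ ∧ l₁ = l₂ := by
  set q := p ^ n with hq
  -- q % 4 = 3
  classical
  have hq3 : q % 4 = 3 := by
    obtain ⟨m, hm⟩ := hn
    subst hm
    rw [hq, Nat.pow_mod, hp3]
    exact pow34 m
  have hq4 : q = 4 * (q / 4) + 3 := by omega
  have h2N : q - 1 = 2 * N := by omega
  have hNodd : Odd N := by
    refine ⟨q / 4, by omega⟩
  have hNpos : 0 < N := by omega
  -- α ≠ 0
  have hcardu : Fintype.card Fˣ = q - 1 := by
    rw [Fintype.card_units, hcard]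
  have hα0 : α ≠ 0 := by
    intro h0
    have h1lt : 1 < Fintype.card Fˣ := by omega
    obtain ⟨u, hu⟩ := Fintype.exists_ne_of_one_lt_card h1lt 1
    obtain ⟨k, hk⟩ := hα (u : F) (Units.ne_zero u)
    rcases Nat.eq_zero_or_pos k with hk0 | hkpos
    · rw [hk0, pow_zero] at hk
      exact hu (Units.ext hk.symm)
    · rw [h0, zero_pow (by omega : k ≠ 0)] at hk
      exact Units.ne_zero u hk.symm
  set u : Fˣ := Units.mk0 α hα0 with hudef
  have hmem : ∀ x : Fˣ, x ∈ Subgroup.zpowers u := by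
    intro x
    obtain ⟨k, hk⟩ := hα (x : F) (Units.ne_zero x)
    exact ⟨k, by ext; simpa [hudef] using hk⟩
  have hord : orderOf u = 2 * N := by
    rw [orderOf_eq_card_of_forall_mem_zpowers hmem, Nat.card_eq_fintype_card, hcardu, h2N]
  have hcoe : ∀ k : ℕ, ((u ^ k : Fˣ) : F) = α ^ k := by
    intro k; simp [hudef]
  -- first equation
  have ha' : u ^ i₁ = u ^ (2 * τ + i₂) := by
    ext; rw [hcoe, hcoe]; exact sub_eq_zero.mp ha
  have h1 : i₁ ≡ 2 * τ + i₂ [MOD 2 * N] := by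
    rw [← hord]; exact pow_eq_pow_iff_modEq.mp ha'
  have h1' : i₁ % (2 * N) = (2 * τ + i₂) % (2 * N) := h1
  rw [Nat.mod_eq_of_lt (by omega), Nat.mod_eq_of_lt (by omega)] at h1'
  have hτ0 : τ = 0 := by omega
  have hi : i₁ = i₂ := by omega
  -- second equation
  subst hτ0
  have hb' : u ^ (4 * l₁ + j₁) = u ^ (4 * 0 + 4 * l₂ + j₂) := by
    ext; rw [hcoe, hcoe]; exact sub_eq_zero.mp hb
  have h2 : 4 * l₁ + j₁ ≡ 4 * l₂ + j₂ [MOD 2 * N] := by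
    have := pow_eq_pow_iff_modEq.mp hb'
    rw [hord] at this
    simpa using this
  have hdvd : (2 * N : ℤ) ∣ (4 * l₂ + j₂ : ℤ) - (4 * l₁ + j₁ : ℤ) := by
    have h := h2.dvd
    push_cast at h
    exact h
  obtain ⟨c, hc⟩ := hdvd
  have h2dvd : (2 : ℤ) ∣ (4 * l₂ + j₂ : ℤ) - (4 * l₁ + j₁ : ℤ) := ⟨(N : ℤ) * c, by rw [hc]; ring⟩
  have hj : j₁ = j₂ := by omega
  have hjc : (j₁ : ℤ) = j₂ := by exact_mod_cast hj
  have hdvd4 : (2 * N : ℤ) ∣ 4 * ((l₂ : ℤ) - l₁) := ⟨c, by linarith⟩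
  have hdvd2 : (N : ℤ) ∣ 2 * ((l₂ : ℤ) - l₁) := by
    obtain ⟨c, hc⟩ := hdvd4
    exact ⟨c, by linarith⟩
  have hnatdvd : N ∣ (2 * ((l₂ : ℤ) - l₁)).natAbs := by
    have := Int.natAbs_dvd_natAbs.mpr hdvd2
    simpa using this
  have habs : (2 * ((l₂ : ℤ) - l₁)).natAbs = ((l₂ : ℤ) - l₁).natAbs * 2 := by
    rw [Int.natAbs_mul]; ring
  rw [habs] at hnatdvd
  have hcop : Nat.Coprime N 2 := Nat.coprime_two_right.mpr hNodd
  have hfin : N ∣ ((l₂ : ℤ) - l₁).natAbs := hcop.dvd_of_dvd_mul_right hnatdvd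
  have hlt : ((l₂ : ℤ) - l₁).natAbs < N := by omega
  have h0 : ((l₂ : ℤ) - l₁).natAbs = 0 := Nat.eq_zero_of_dvd_of_lt hfin hlt
  have hl : l₁ = l₂ := by omega
  exact ⟨rfl, hi, hj, hl⟩
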